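/- For every a > 0 and every integer n ≥ 1, 1/(2(n+a-1)) - 1/(12(n+a-1)²) < y_n - γ(a) ≤ 1/(2(n+a-1)) + β₄/(n+a-1)², where β₄ = a²(ψ(a) - ln(a)) + a/2, y_n = ψ(n+a) - ψ(a) - ln((n+a-1)/a), and γ(a) = ln(a) - ψ(a). These constants -1/12 and β₄ are best possible. -/

import Mathlib

open Real Filter Topology Set

noncomputable def digamma (x : ℝ) : ℝ := deriv Real.Gamma x / Real.Gamma x

noncomputable def trigamma (x : ℝ) : ℝ := deriv digamma x



lemma diffAt_Gamma {x : ℝ} (hx : 0 < x) : DifferentiableAt ℝ Real.Gamma x :=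
  Real.differentiableAt_Gamma (fun m => by
    have : (0:ℝ) ≤ m := Nat.cast_nonneg m
    intro h; rw [h] at hx; linarith)

lemma deriv_logGamma {x : ℝ} (hx : 0 < x) :
    deriv (fun y => Real.log (Real.Gamma y)) x = digamma x :=
  deriv.log (diffAt_Gamma hx) (Real.Gamma_pos_of_pos hx).ne'

lemma diffAt_logGamma {x : ℝ} (hx : 0 < x) :
    DifferentiableAt ℝ (fun y => Real.log (Real.Gamma y)) x :=
  (diffAt_Gamma hx).log (Real.Gamma_pos_of_pos hx).ne'

lemma logGamma_rec {x : ℝ} (hx : 0 < x) :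
    Real.log (Real.Gamma (x + 1)) = Real.log (Real.Gamma x) + Real.log x := by
  rw [Real.Gamma_add_one hx.ne', Real.log_mul hx.ne' (Real.Gamma_pos_of_pos hx).ne', add_comm]

lemma digamma_rec {x : ℝ} (hx : 0 < x) : digamma (x + 1) = digamma x + 1 / x := by
  have h : deriv (fun y => Real.log (Real.Gamma y)) (x + 1)
      = deriv (fun y => Real.log (Real.Gamma y)) x + 1 / x := by
    rw [← deriv_comp_add_const, one_div, ← Real.deriv_log,
      ← deriv_add (diffAt_logGamma hx) (Real.differentiableAt_log hx.ne')]
    apply Filter.EventuallyEq.deriv_eq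
    filter_upwards [eventually_gt_nhds hx] using fun y hy => logGamma_rec hy
  rwa [deriv_logGamma (by linarith), deriv_logGamma hx] at h

lemma digamma_le_log {x : ℝ} (hx : 0 < x) : digamma x ≤ Real.log x := by
  have h := Real.convexOn_log_Gamma.deriv_le_slope (mem_Ioi.mpr hx)
    (mem_Ioi.mpr (by linarith : (0:ℝ) < x + 1)) (by linarith) (diffAt_logGamma hx)
  rw [Function.comp_def, deriv_logGamma hx] at h
  refine h.trans (le_of_eq ?_)
  rw [slope_def_field, show x + 1 - x = (1:ℝ) by ring, div_one, logGamma_rec hx, add_sub_cancel_left]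

lemma log_le_digamma {x : ℝ} (hx : 0 < x) : Real.log x ≤ digamma (x + 1) := by
  have h := Real.convexOn_log_Gamma.slope_le_deriv (mem_Ioi.mpr hx)
    (mem_Ioi.mpr (by linarith : (0:ℝ) < x + 1)) (by linarith)
    (diffAt_logGamma (by linarith))
  rw [Function.comp_def, deriv_logGamma (by linarith)] at h
  refine le_trans (le_of_eq ?_) h
  rw [slope_def_field, show x + 1 - x = (1:ℝ) by ring, div_one, logGamma_rec hx, add_sub_cancel_left]

lemma log_ratio_lb {x : ℝ} (h0 : 0 ≤ x) (h1 : x < 1) :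
    2*(x + x^3/3 + x^5/5) ≤ Real.log ((1+x)/(1-x)) := by
  set F : ℝ → ℝ := fun z => Real.log (1+z) - Real.log (1-z) - 2*(z + z^3/3 + z^5/5) with hF
  have hder : ∀ y ∈ Icc (0:ℝ) x, HasDerivAt F (2*y^6/(1-y^2)) y := by
    intro y hy
    have hy1 : (0:ℝ) < 1 + y := by nlinarith [hy.1]
    have hy2 : (0:ℝ) < 1 - y := by nlinarith [hy.2, h1]
    have d1 : HasDerivAt (fun z : ℝ => Real.log (1+z)) (1/(1+y)) y := by
      simpa using ((hasDerivAt_id y).const_add 1).log hy1.ne'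
    have d2 : HasDerivAt (fun z : ℝ => Real.log (1-z)) ((-1)/(1-y)) y := by
      simpa using ((hasDerivAt_id y).const_sub 1).log hy2.ne'
    have d3 : HasDerivAt (fun z : ℝ => 2*(z + z^3/3 + z^5/5))
        (2*(1 + (3:ℕ)*y^2/3 + (5:ℕ)*y^4/5)) y := by
      exact (((hasDerivAt_id y).add ((hasDerivAt_pow 3 y).div_const 3)).add
        ((hasDerivAt_pow 5 y).div_const 5)).const_mul 2
    have hysq : (0:ℝ) < 1 - y^2 := by nlinarith
    have := (d1.sub d2).sub d3
    refine this.congr_deriv ?_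
    push_cast
    field_simp
    ring
  have mono : MonotoneOn F (Icc 0 x) := by
    apply monotoneOn_of_deriv_nonneg (convex_Icc 0 x)
    · exact fun y hy => ((hder y hy).differentiableAt.continuousAt).continuousWithinAt
    · intro y hy
      rw [interior_Icc] at hy
      exact ((hder y ⟨hy.1.le, hy.2.le⟩).differentiableAt).differentiableWithinAt
    · intro y hy
      rw [interior_Icc] at hy
      rw [(hder y ⟨hy.1.le, hy.2.le⟩).deriv]
      have : (0:ℝ) < 1 - y^2 := by nlinarith [hy.1, hy.2, h1]
      positivity
  have h2 : F 0 ≤ F x := mono ⟨le_refl 0, h0⟩ ⟨h0, le_refl x⟩ h0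
  have hF0 : F 0 = 0 := by simp [hF]
  have hlog : Real.log ((1+x)/(1-x)) = Real.log (1+x) - Real.log (1-x) :=
    Real.log_div (by linarith) (by linarith)
  rw [hF0, hF] at h2
  simp only at h2
  linarith [h2, hlog.ge, hlog.le]

lemma log_ratio_ub {x : ℝ} (h0 : 0 ≤ x) (h1 : x < 1) :
    Real.log ((1+x)/(1-x)) ≤ 2*(x + x^3/3 + x^5/5) + (2/7)*x^7/(1-x^2) := by
  set F : ℝ → ℝ := fun z =>
    2*(z + z^3/3 + z^5/5) + (2/7)*z^7/(1-z^2) - (Real.log (1+z) - Real.log (1-z)) with hF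
  have hder : ∀ y ∈ Icc (0:ℝ) x, HasDerivAt F ((4/7)*y^8/(1-y^2)^2) y := by
    intro y hy
    have hy1 : (0:ℝ) < 1 + y := by nlinarith [hy.1]
    have hy2 : (0:ℝ) < 1 - y := by nlinarith [hy.2, h1]
    have hysq : (0:ℝ) < 1 - y^2 := by nlinarith
    have d1 : HasDerivAt (fun z : ℝ => Real.log (1+z)) (1/(1+y)) y := by
      simpa using ((hasDerivAt_id y).const_add 1).log hy1.ne'
    have d2 : HasDerivAt (fun z : ℝ => Real.log (1-z)) ((-1)/(1-y)) y := by
      simpa using ((hasDerivAt_id y).const_sub 1).log hy2.ne'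
    have d3 : HasDerivAt (fun z : ℝ => 2*(z + z^3/3 + z^5/5))
        (2*(1 + (3:ℕ)*y^2/3 + (5:ℕ)*y^4/5)) y :=
      (((hasDerivAt_id y).add ((hasDerivAt_pow 3 y).div_const 3)).add
        ((hasDerivAt_pow 5 y).div_const 5)).const_mul 2
    have dnum : HasDerivAt (fun z : ℝ => (2/7)*z^7) ((2/7)*((7:ℕ)*y^6)) y :=
      (hasDerivAt_pow 7 y).const_mul (2/7)
    have dden : HasDerivAt (fun z : ℝ => 1 - z^2) (-((2:ℕ)*y^1)) y := by
      simpa using ((hasDerivAt_pow 2 y).const_sub 1)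
    have d4 := dnum.div dden hysq.ne'
    have := (d3.add d4).sub (d1.sub d2)
    refine this.congr_deriv ?_
    push_cast
    field_simp
    ring
  have mono : MonotoneOn F (Icc 0 x) := by
    apply monotoneOn_of_deriv_nonneg (convex_Icc 0 x)
    · exact fun y hy => ((hder y hy).differentiableAt.continuousAt).continuousWithinAt
    · intro y hy
      rw [interior_Icc] at hy
      exact ((hder y ⟨hy.1.le, hy.2.le⟩).differentiableAt).differentiableWithinAt
    · intro y hy
      rw [interior_Icc] at hy
      rw [(hder y ⟨hy.1.le, hy.2.le⟩).deriv]
      have : (0:ℝ) < 1 - y^2 := by nlinarith [hy.1, hy.2, h1]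
      positivity
  have h2 : F 0 ≤ F x := mono ⟨le_refl 0, h0⟩ ⟨h0, le_refl x⟩ h0
  have hF0 : F 0 = 0 := by simp [hF]
  have hlog : Real.log ((1+x)/(1-x)) = Real.log (1+x) - Real.log (1-x) :=
    Real.log_div (by linarith) (by linarith)
  rw [hF0, hF] at h2
  simp only at h2
  linarith [h2, hlog.ge, hlog.le]

noncomputable def dd (t : ℝ) : ℝ := 1/(2*t) + 1/(2*(t+1)) - Real.log ((t+1)/t)
noncomputable def TT (t : ℝ) : ℝ := 1/(12*t^2) - 1/(120*t^4)

lemma ratio_eq {t : ℝ} (ht : 0 < t) :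
    (1 + 1/(2*t+1))/(1 - 1/(2*t+1)) = (t+1)/t := by
  have h : (0:ℝ) < 2*t+1 := by linarith
  have h2 : (0:ℝ) < 1 - 1/(2*t+1) := by
    rw [sub_pos, div_lt_one h]; linarith
  rw [div_eq_div_iff h2.ne' ht.ne']
  field_simp
  ring

lemma key_I {t : ℝ} (ht : 0 < t) : dd t < 1/(12*t^2) - 1/(12*(t+1)^2) := by
  have h1 : (0:ℝ) < 2*t+1 := by linarith
  have hx0 : (0:ℝ) ≤ 1/(2*t+1) := by positivity
  have hx1 : 1/(2*t+1) < 1 := by rw [div_lt_one h1]; linarith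
  have hlb := log_ratio_lb hx0 hx1
  rw [ratio_eq ht] at hlb
  have hpoly : 1/(12*t^2) - 1/(12*(t+1)^2) -
      (1/(2*t) + 1/(2*(t+1)) - 2*(1/(2*t+1) + (1/(2*t+1))^3/3 + (1/(2*t+1))^5/5))
      = (5 + 30*t + 94*t^2 + 128*t^3 + 64*t^4)/(60 * t^2 * (t+1)^2 * (2*t+1)^5) := by
    field_simp
    ring
  have hgap : 0 < (5 + 30*t + 94*t^2 + 128*t^3 + 64*t^4)/(60 * t^2 * (t+1)^2 * (2*t+1)^5) := by
    positivity
  simp only [dd]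
  linarith [hlb, hpoly, hgap]

lemma key_II {t : ℝ} (ht : 0 < t) : TT t - TT (t+1) ≤ dd t := by
  have h1 : (0:ℝ) < 2*t+1 := by linarith
  have hx0 : (0:ℝ) ≤ 1/(2*t+1) := by positivity
  have hx1 : 1/(2*t+1) < 1 := by rw [div_lt_one h1]; linarith
  have hub := log_ratio_ub hx0 hx1
  rw [ratio_eq ht] at hub
  have hxx : 1 - (1/(2*t+1))^2 = (4*t*(t+1))/(2*t+1)^2 := by
    field_simp
    ring
  rw [hxx] at hub
  have hpoly : (1/(2*t) + 1/(2*(t+1)) -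
      (2*(1/(2*t+1) + (1/(2*t+1))^3/3 + (1/(2*t+1))^5/5)
        + (2/7)*(1/(2*t+1))^7/((4*t*(t+1))/(2*t+1)^2))) - (TT t - TT (t+1))
      = (7 + 98*t + 532*t^2 + 1508*t^3 + 2354*t^4 + 1920*t^5 + 640*t^6)
        /(840*t^4*(t+1)^4*(2*t+1)^5) := by
    simp only [TT]
    field_simp
    ring
  have hgap : 0 ≤ (7 + 98*t + 532*t^2 + 1508*t^3 + 2354*t^4 + 1920*t^5 + 640*t^6)
        /(840*t^4*(t+1)^4*(2*t+1)^5) := by positivity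
  simp only [dd]
  linarith [hub, hpoly, hgap]

lemma key_III {t : ℝ} (ht : 0 < t) : t^2 * dd t ≤ (2*t+1) * TT (t+1) := by
  have h1 : (0:ℝ) < 2*t+1 := by linarith
  have hx0 : (0:ℝ) ≤ 1/(2*t+1) := by positivity
  have hx1 : 1/(2*t+1) < 1 := by rw [div_lt_one h1]; linarith
  have hlb := log_ratio_lb hx0 hx1
  rw [ratio_eq ht] at hlb
  have hdup : dd t ≤ 1/(2*t) + 1/(2*(t+1))
      - 2*(1/(2*t+1) + (1/(2*t+1))^3/3 + (1/(2*t+1))^5/5) := by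
    simp only [dd]; linarith [hlb]
  have hpoly : (2*t+1) * TT (t+1) - t^2 * (1/(2*t) + 1/(2*(t+1))
      - 2*(1/(2*t+1) + (1/(2*t+1))^3/3 + (1/(2*t+1))^5/5))
      = (9*t + 68*t^2 + 258*t^3 + 532*t^4 + 588*t^5 + 320*t^6 + 64*t^7)
        /(120*t*(t+1)^4*(2*t+1)^5) := by
    simp only [TT]
    field_simp
    ring
  have hgap : 0 ≤ (9*t + 68*t^2 + 258*t^3 + 532*t^4 + 588*t^5 + 320*t^6 + 64*t^7)
        /(120*t*(t+1)^4*(2*t+1)^5) := by positivity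
  nlinarith [hdup, hpoly, hgap, sq_nonneg t, mul_le_mul_of_nonneg_left hdup (sq_nonneg t)]


noncomputable def GG (t : ℝ) : ℝ := digamma (t+1) - Real.log t - 1/(2*t)

lemma GG_step {t : ℝ} (ht : 0 < t) : GG (t+1) = GG t + dd t := by
  have h1 : digamma (t+1+1) = digamma (t+1) + 1/(t+1) := digamma_rec (by linarith)
  have h2 : Real.log (t+1) = Real.log t + Real.log ((t+1)/t) := by
    rw [Real.log_div (by linarith) ht.ne']; ring
  simp only [GG, dd]
  rw [h1, h2]
  have h0 : t + 1 ≠ 0 := by linarith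
  field_simp
  ring

lemma GG_abs {t : ℝ} (ht : 0 < t) : ‖GG t‖ ≤ 1/t := by
  have h1 : Real.log t ≤ digamma (t+1) := log_le_digamma ht
  have h2 : digamma (t+1) ≤ Real.log (t+1) := digamma_le_log (by linarith)
  have h3 : Real.log (t+1) - Real.log t ≤ 1/t := by
    have h4 := Real.log_le_sub_one_of_pos (show (0:ℝ) < (t+1)/t by positivity)
    have h5 : (t+1)/t - 1 = 1/t := by field_simp; ring
    rw [← Real.log_div (by linarith) ht.ne']
    linarith
  have h6 : 1/t - 1/(2*t) = 1/(2*t) := by field_simp; ring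
  have h7 : (0:ℝ) < 1/(2*t) := by positivity
  rw [Real.norm_eq_abs, abs_le]
  constructor <;> simp only [GG] <;> linarith

lemma tendsto_aux (t : ℝ) : Tendsto (fun m : ℕ => t + (m:ℝ)) atTop atTop :=
  tendsto_atTop_add_const_left _ t tendsto_natCast_atTop_atTop

lemma GG_tendsto {t : ℝ} (ht : 0 < t) : Tendsto (fun m : ℕ => GG (t+m)) atTop (𝓝 0) := by
  apply squeeze_zero_norm (fun m : ℕ => GG_abs (by positivity : (0:ℝ) < t + m))
  simpa [one_div, Pi.inv_def] using (tendsto_aux t).inv_tendsto_atTop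

lemma TT_tendsto {t : ℝ} (ht : 0 < t) : Tendsto (fun m : ℕ => TT (t+m)) atTop (𝓝 0) := by
  have h2 : Tendsto (fun m : ℕ => 12*(t+m)^2) atTop atTop := by
    apply Tendsto.const_mul_atTop (by norm_num : (0:ℝ) < 12)
    exact (tendsto_pow_atTop (two_ne_zero)).comp (tendsto_aux t)
  have h4 : Tendsto (fun m : ℕ => 120*(t+m)^4) atTop atTop := by
    apply Tendsto.const_mul_atTop (by norm_num : (0:ℝ) < 120)
    exact (tendsto_pow_atTop (by norm_num : 4 ≠ 0)).comp (tendsto_aux t)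
  have := (h2.inv_tendsto_atTop).sub (h4.inv_tendsto_atTop)
  simpa [TT, one_div] using this

lemma GG_sum {t : ℝ} (ht : 0 < t) (m : ℕ) :
    GG (t+m) = GG t + ∑ k ∈ Finset.range m, dd (t+k) := by
  induction m with
  | zero => simp
  | succ n ih =>
    have hpos : (0:ℝ) < t + n := by positivity
    rw [show t + ((n+1 : ℕ):ℝ) = (t + n) + 1 by push_cast; ring,
      GG_step hpos, ih, Finset.sum_range_succ]
    ring

lemma sum_dd_ub {t : ℝ} (ht : 0 < t) (m : ℕ) :
    ∑ k ∈ Finset.range m, dd (t+k) ≤ 1/(12*t^2) - 1/(12*(t+m)^2) := by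
  calc ∑ k ∈ Finset.range m, dd (t+k)
      ≤ ∑ k ∈ Finset.range m, (1/(12*(t+k)^2) - 1/(12*(t+(k+1:ℕ))^2)) := by
        apply Finset.sum_le_sum
        intro k _
        have hk : (0:ℝ) < t + k := by positivity
        rw [show (t + ((k+1:ℕ):ℝ)) = (t+k)+1 by push_cast; ring]
        exact (key_I hk).le
    _ = 1/(12*(t+(0:ℕ))^2) - 1/(12*(t+m)^2) :=
        Finset.sum_range_sub' (fun k : ℕ => 1/(12*(t+k)^2)) m
    _ = 1/(12*t^2) - 1/(12*(t+m)^2) := by norm_num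

lemma sum_dd_lb {t : ℝ} (ht : 0 < t) (m : ℕ) :
    TT t - TT (t+m) ≤ ∑ k ∈ Finset.range m, dd (t+k) := by
  calc TT t - TT (t+m) = TT (t+(0:ℕ)) - TT (t+m) := by norm_num
    _ = ∑ k ∈ Finset.range m, (TT (t+k) - TT (t+(k+1:ℕ))) :=
        (Finset.sum_range_sub' (fun k : ℕ => TT (t+k)) m).symm
    _ ≤ ∑ k ∈ Finset.range m, dd (t+k) := by
        apply Finset.sum_le_sum
        intro k _
        have hk : (0:ℝ) < t + k := by positivity
        rw [show (t + ((k+1:ℕ):ℝ)) = (t+k)+1 by push_cast; ring]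
        exact key_II hk

lemma GG_lb' {t : ℝ} (ht : 0 < t) : -(1/(12*t^2)) ≤ GG t := by
  have key : ∀ m : ℕ, GG (t+m) ≤ GG t + 1/(12*t^2) := by
    intro m
    have h1 := GG_sum ht m
    have h2 := sum_dd_ub ht m
    have h3 : (0:ℝ) < 1/(12*(t+m)^2) := by positivity
    linarith
  have := le_of_tendsto (GG_tendsto ht) (Filter.Eventually.of_forall key)
  linarith

lemma GG_lb {t : ℝ} (ht : 0 < t) : -(1/(12*t^2)) < GG t := by
  have h1 := GG_lb' (show (0:ℝ) < t+1 by linarith)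
  have h2 := GG_step ht
  have h3 := key_I ht
  linarith

lemma GG_ub {t : ℝ} (ht : 0 < t) : GG t ≤ -(TT t) := by
  have key : ∀ m : ℕ, GG t + TT t ≤ GG (t+m) + TT (t+m) := by
    intro m
    have h1 := GG_sum ht m
    have h2 := sum_dd_lb ht m
    linarith
  have hlim : Tendsto (fun m : ℕ => GG (t+m) + TT (t+m)) atTop (𝓝 0) := by
    simpa using (GG_tendsto ht).add (TT_tendsto ht)
  have := ge_of_tendsto hlim (Filter.Eventually.of_forall key)
  linarith

lemma h_step {t : ℝ} (ht : 0 < t) : (t+1)^2 * GG (t+1) ≤ t^2 * GG t := by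
  have h1 := GG_step ht
  have h2 := GG_ub (show (0:ℝ) < t+1 by linarith)
  have h3 := key_III ht
  nlinarith [mul_le_mul_of_nonneg_left h2 (by linarith : (0:ℝ) ≤ 2*t+1)]

theorem main_thm2_part2 (a : ℝ) (ha : 0 < a) :
    let γa : ℝ := Real.log a - digamma a
    let y : ℕ → ℝ := fun n => digamma (n + a) - digamma a - Real.log ((n + a - 1) / a)
    let β₄ : ℝ := a ^ 2 * (digamma a - Real.log a) + a / 2
    (∀ n : ℕ, 1 ≤ n →
      1 / (2 * (n + a - 1)) - 1 / (12 * (n + a - 1) ^ 2) < y n - γa ∧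
      y n - γa ≤ 1 / (2 * (n + a - 1)) + β₄ / (n + a - 1) ^ 2) ∧
    y 1 - γa = 1 / (2 * a) + β₄ / a ^ 2 ∧
    (∀ c : ℝ, -1/12 < c → ∃ n : ℕ, 1 ≤ n ∧
      y n - γa ≤ 1 / (2 * (n + a - 1)) + c / (n + a - 1) ^ 2) := by
  intro γa y β₄
  have hyG : ∀ n : ℕ, 1 ≤ n → y n - γa = GG ((n:ℝ) + a - 1) + 1/(2*((n:ℝ)+a-1)) := by
    intro n hn
    have hn1 : (1:ℝ) ≤ (n:ℝ) := by exact_mod_cast hn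
    have ht : (0:ℝ) < (n:ℝ) + a - 1 := by linarith
    simp only [y, γa, GG]
    rw [Real.log_div (by linarith) ha.ne',
      show (n:ℝ) + a - 1 + 1 = (n:ℝ) + a by ring]
    ring
  have hβ : β₄ = a^2 * GG a := by
    simp only [β₄, GG]
    rw [digamma_rec ha]
    field_simp
    ring
  have hmono : ∀ m : ℕ, (a+(m:ℝ))^2 * GG (a+(m:ℝ)) ≤ a^2 * GG a := by
    intro m
    induction m with
    | zero => simp
    | succ k ih =>
      have hk : (0:ℝ) < a + (k:ℝ) := by positivity
      calc (a+((k+1:ℕ):ℝ))^2 * GG (a+((k+1:ℕ):ℝ))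
          = ((a+(k:ℝ))+1)^2 * GG ((a+(k:ℝ))+1) := by
            rw [show a+((k+1:ℕ):ℝ) = (a+(k:ℝ))+1 by push_cast; ring]
        _ ≤ (a+(k:ℝ))^2 * GG (a+(k:ℝ)) := h_step hk
        _ ≤ a^2 * GG a := ih
  refine ⟨?_, ?_, ?_⟩
  · intro n hn
    have hn1 : (1:ℝ) ≤ (n:ℝ) := by exact_mod_cast hn
    have ht : (0:ℝ) < (n:ℝ) + a - 1 := by linarith
    have hy := hyG n hn
    constructor
    · have := GG_lb ht
      linarith
    · obtain ⟨m, rfl⟩ : ∃ m, n = m + 1 := ⟨n - 1, (Nat.succ_pred_eq_of_pos hn).symm⟩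
      have htm : ((m+1:ℕ):ℝ) + a - 1 = a + (m:ℝ) := by push_cast; ring
      have hmm := hmono m
      have ht2 : (0:ℝ) < (((m+1:ℕ):ℝ) + a - 1)^2 := by positivity
      have hGle : GG (((m+1:ℕ):ℝ) + a - 1) ≤ β₄ / (((m+1:ℕ):ℝ) + a - 1)^2 := by
        rw [le_div_iff₀ ht2, hβ, htm]
        nlinarith [hmm]
      linarith
  · have hy := hyG 1 le_rfl
    have h1a : ((1:ℕ):ℝ) + a - 1 = a := by push_cast; ring
    rw [h1a] at hy
    have hb2 : β₄ / a^2 = GG a := by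
      rw [hβ]
      field_simp
    rw [hy, hb2]
    ring
  · intro c hc
    have hε : (0:ℝ) < c + 1/12 := by linarith
    obtain ⟨n0, hn0⟩ := exists_nat_gt (max 1 (1/(120*(c+1/12))) + 1 - a)
    refine ⟨n0 + 1, Nat.le_add_left 1 n0, ?_⟩
    have htdef : ((n0+1:ℕ):ℝ) + a - 1 = (n0:ℝ) + a := by push_cast; ring
    set t : ℝ := ((n0+1:ℕ):ℝ) + a - 1 with htt
    have htgt : max 1 (1/(120*(c+1/12))) < t := by
      rw [htdef] at htt ⊢
      have := le_max_left (1:ℝ) (1/(120*(c+1/12)))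
      linarith [hn0]
    have ht1 : (1:ℝ) < t := lt_of_le_of_lt (le_max_left _ _) htgt
    have htM : 1/(120*(c+1/12)) < t := lt_of_le_of_lt (le_max_right _ _) htgt
    have htpos : (0:ℝ) < t := by linarith
    have hA : 1 < t * (120*(c+1/12)) := (div_lt_iff₀ (by positivity)).mp htM
    have h120 : 1/(120*t^2) ≤ c + 1/12 := by
      rw [div_le_iff₀ (by positivity)]
      nlinarith [hA, ht1]
    have hG := GG_ub htpos
    have hTT : c/t^2 - (-(TT t)) = (c + 1/12 - 1/(120*t^2))/t^2 := by
      simp only [TT]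
      field_simp
      ring
    have hnum : (0:ℝ) ≤ (c + 1/12 - 1/(120*t^2))/t^2 :=
      div_nonneg (by linarith) (by positivity)
    have hy := hyG (n0+1) (Nat.le_add_left 1 n0)
    rw [← htt] at hy
    linarith
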